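/- Let t be a rooted tree with pairwise distinct leaf labels, S a set of labels, and u a vertex of t with S ⊆ L(u). Then counter_S(u) = |S| if and only if for every child w of u, either L(w) ∩ S = ∅ or L(w) ⊆ S; that is, the counter test at u exactly characterizes compatibility of S with t at u. -/

import Mathlib

inductive RTree (α : Type*) where
  | leaf (a : α)
  | node (children : List (RTree α))

namespace RTree

variable {α : Type*} [DecidableEq α]

/-- The list of leaf labels of a tree. -/
def leafList : RTree α → List α
  | leaf a => [a]
  | node cs => (cs.attach.map fun ⟨w, _⟩ => leafList w).flatten
decreasing_by have := List.sizeOf_lt_of_mem ‹_›; simp only [node.sizeOf_spec]; omega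

/-- `L v` is the finite set of labels of leaves in the subtree rooted at `v`. -/
def L (v : RTree α) : Finset α := (leafList v).toFinset

/-- The counter function. -/
def counter (S : Finset α) : RTree α → ℕ
  | leaf a => if a ∈ S then 1 else 0
  | node cs =>
      (cs.attach.map fun ⟨w, _⟩ =>
        if counter S w = (L w).card then counter S w else 0).sum
decreasing_by have := List.sizeOf_lt_of_mem ‹_›; simp only [node.sizeOf_spec]; omega

/-- `IsVertex v t` means that `v` is a vertex (subtree) of `t`. -/
inductive IsVertex : RTree α → RTree α → Prop
  | refl (t : RTree α) : IsVertex t t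
  | child {v w : RTree α} {cs : List (RTree α)} : w ∈ cs → IsVertex v w → IsVertex v (node cs)

/-- The list of all vertices (subtrees) of a tree. -/
def vertexList : RTree α → List (RTree α)
  | leaf a => [leaf a]
  | node cs => node cs :: (cs.attach.map fun ⟨w, _⟩ => vertexList w).flatten
decreasing_by have := List.sizeOf_lt_of_mem ‹_›; simp only [node.sizeOf_spec]; omega

set_option linter.unusedSectionVars false

lemma leafList_node (cs : List (RTree α)) :
    leafList (node cs) = (cs.map leafList).flatten := by
  rw [leafList]
  congr 1
  rw [show (fun (x : {w // w ∈ cs}) => leafList x.1) = leafList ∘ Subtype.val from rfl,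
    ← List.map_map, List.attach_map_subtype_val]

lemma counter_node (S : Finset α) (cs : List (RTree α)) :
    counter S (node cs) = (cs.map fun w =>
      if counter S w = (L w).card then counter S w else 0).sum := by
  rw [counter]
  congr 1
  rw [show (fun (x : {w // w ∈ cs}) => if counter S x.1 = (L x.1).card then counter S x.1 else 0)
      = (fun w => if counter S w = (L w).card then counter S w else 0) ∘ Subtype.val from rfl,
    ← List.map_map, List.attach_map_subtype_val]

lemma filter_flatten' (p : α → Bool) (L : List (List α)) :
    L.flatten.filter p = (L.map (List.filter p)).flatten := by
  induction L with
  | nil => simp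
  | cons a l ih => simp [List.filter_append, ih]

lemma flatten_len (S : Finset α) (cs : List (RTree α)) :
    ((leafList (node cs)).filter (· ∈ S)).length
      = (cs.map fun w => ((leafList w).filter (· ∈ S)).length).sum := by
  rw [leafList_node, filter_flatten', List.length_flatten, List.map_map, List.map_map]
  rfl

lemma nodup_child {cs : List (RTree α)} {w : RTree α}
    (hnd : (leafList (node cs)).Nodup) (hw : w ∈ cs) : (leafList w).Nodup := by
  rw [leafList_node, List.nodup_flatten] at hnd
  exact hnd.1 _ (List.mem_map_of_mem (f := leafList) hw)

lemma nodup_of_isVertex {u t : RTree α} (hu : IsVertex u t) (hnd : t.leafList.Nodup) :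
    u.leafList.Nodup := by
  induction hu with
  | refl => exact hnd
  | child hw _ ih => exact ih (nodup_child hnd hw)

theorem counter_le (S : Finset α) : (v : RTree α) →
    counter S v ≤ ((v.leafList).filter (· ∈ S)).length
  | leaf a => by
    rw [counter, leafList]
    by_cases h : a ∈ S <;> simp [h]
  | node cs => by
    rw [counter_node, flatten_len]
    refine List.sum_le_sum fun w hw => ?_
    have h1 : (if counter S w = (L w).card then counter S w else 0) ≤ counter S w := by
      split <;> omega
    exact h1.trans (counter_le S w)
decreasing_by have := List.sizeOf_lt_of_mem ‹_›; simp only [node.sizeOf_spec]; omega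

lemma card_L_eq {v : RTree α} (hnd : v.leafList.Nodup) : (L v).card = v.leafList.length :=
  List.toFinset_card_of_nodup hnd

theorem counter_eq_of_subset (S : Finset α) : (v : RTree α) → v.leafList.Nodup → L v ⊆ S →
    counter S v = v.leafList.length
  | leaf a => by
    intro _ hsub
    have : a ∈ S := hsub (by simp [L, leafList])
    simp [counter, leafList, this]
  | node cs => by
    intro hnd hsub
    rw [counter_node, leafList_node, List.length_flatten, List.map_map]
    congr 1
    refine List.map_congr_left fun w hw => ?_
    have hndw := nodup_child hnd hw
    have hsubw : L w ⊆ S := by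
      refine fun a ha => hsub ?_
      simp only [L, List.mem_toFinset, leafList_node, List.mem_flatten] at ha ⊢
      exact ⟨leafList w, List.mem_map_of_mem (f := leafList) hw, ha⟩
    have hc := counter_eq_of_subset S w hndw hsubw
    simp [hc, card_L_eq hndw]
decreasing_by have := List.sizeOf_lt_of_mem ‹_›; simp only [node.sizeOf_spec]; omega

lemma subset_of_counter_eq {S : Finset α} {v : RTree α} (hnd : v.leafList.Nodup)
    (h : counter S v = (L v).card) : L v ⊆ S := by
  have h1 := counter_le S v
  have h2 := card_L_eq hnd
  have h3 := List.length_filter_le (fun a => decide (a ∈ S)) v.leafList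
  have h4 : ((v.leafList).filter (· ∈ S)).length = v.leafList.length := by omega
  intro a ha
  have := List.length_filter_eq_length_iff.mp h4 a (by simpa [L] using ha)
  simpa using this

lemma filter_len_eq {S : Finset α} {u : RTree α} (hnd : u.leafList.Nodup) (hS : S ⊆ L u) :
    ((u.leafList).filter (· ∈ S)).length = S.card := by
  have hndf : ((u.leafList).filter (· ∈ S)).Nodup := hnd.filter _
  rw [← List.toFinset_card_of_nodup hndf, List.toFinset_filter]
  have : (u.leafList.toFinset.filter fun a => decide (a ∈ S)) = L u ∩ S := by
    simpa [L] using Finset.filter_mem_eq_inter (s := u.leafList.toFinset) (t := S)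
  rw [this, Finset.inter_eq_right.mpr hS]

lemma sum_eq_of_le {β : Type*} {f g : β → ℕ} : ∀ (l : List β), (∀ w ∈ l, f w ≤ g w) →
    (l.map f).sum = (l.map g).sum → ∀ w ∈ l, f w = g w
  | [], _, _, w, hw => by simp at hw
  | a :: l, h, hs, w, hw => by
    simp only [List.map_cons, List.sum_cons] at hs
    have h1 : f a ≤ g a := h a (List.mem_cons_self (a := a) (l := l))
    have h2 : (l.map f).sum ≤ (l.map g).sum :=
      List.sum_le_sum fun w hw => h w (List.mem_cons_of_mem _ hw)
    have hfa : f a = g a := by omega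
    have hls : (l.map f).sum = (l.map g).sum := by omega
    rcases List.mem_cons.mp hw with rfl | hw
    · exact hfa
    · exact sum_eq_of_le l (fun w hw => h w (List.mem_cons_of_mem _ hw)) hls w hw

/-- for `S ⊆ L(u)`, we have `counter_S(u) = |S|` iff for every child `w` of `u`,
either `L(w) ∩ S = ∅` or `L(w) ⊆ S`; i.e. the counter test at `u` exactly characterizes
compatibility of `S` with `t` at `u`. -/
theorem counter_eq_iff_compatible (t : RTree α) (hnd : t.leafList.Nodup)
    (S : Finset α) (u : RTree α) (hu : IsVertex u t) (hS : S ⊆ L u) :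
    counter S u = S.card ↔
      ∀ cs : List (RTree α), u = node cs → ∀ w ∈ cs, L w ∩ S = ∅ ∨ L w ⊆ S := by
  have hndu : u.leafList.Nodup := nodup_of_isVertex hu hnd
  cases u with
  | leaf a =>
    constructor
    · rintro _ cs h; cases h
    · intro _
      have hsub : S ⊆ {a} := by simpa [L, leafList] using hS
      rcases Finset.subset_singleton_iff.mp hsub with rfl | rfl
      · have : a ∉ (∅ : Finset α) := by simp
        simp [counter, this]
      · simp [counter]
  | node cs =>
    have hkey : (cs.map fun w => ((leafList w).filter (· ∈ S)).length).sum = S.card := by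
      rw [← flatten_len]
      exact filter_len_eq hndu hS
    constructor
    · intro h cs' hcs' w hw
      obtain rfl : cs = cs' := by injection hcs'
      by_cases hne : L w ∩ S = ∅
      · exact Or.inl hne
      right
      rw [counter_node] at h
      have hle : ∀ w ∈ cs, (if counter S w = (L w).card then counter S w else 0)
          ≤ ((leafList w).filter (· ∈ S)).length := fun w _ => by
        have := counter_le S w
        split <;> omega
      have heq := sum_eq_of_le cs hle (by rw [h, hkey]) w hw
      have hpos : 0 < ((leafList w).filter (· ∈ S)).length := by
        obtain ⟨a, ha⟩ := Finset.nonempty_iff_ne_empty.mpr hne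
        rw [Finset.mem_inter] at ha
        have haw : a ∈ leafList w := by simpa [L] using ha.1
        have : a ∈ (leafList w).filter (· ∈ S) := List.mem_filter.mpr ⟨haw, by simp [ha.2]⟩
        exact List.length_pos_of_mem this
      have hcond : counter S w = (L w).card := by
        by_contra hc
        rw [if_neg hc] at heq
        omega
      exact subset_of_counter_eq (nodup_child hndu hw) hcond
    · intro hcomp
      have hcomp' := hcomp cs rfl
      rw [counter_node, ← hkey]
      congr 1
      refine List.map_congr_left fun w hw => ?_
      rcases hcomp' w hw with hemp | hsub
      · have h0 : ((leafList w).filter (· ∈ S)).length = 0 := by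
          rw [List.length_eq_zero_iff, List.filter_eq_nil_iff]
          intro a ha hmem
          have : a ∈ L w ∩ S := Finset.mem_inter.mpr ⟨by simpa [L] using ha, by simpa using hmem⟩
          simp [hemp] at this
        have := counter_le S w
        rw [h0]
        split <;> omega
      · have hndw := nodup_child hndu hw
        have hc := counter_eq_of_subset S w hndw hsub
        have hfull : ((leafList w).filter (· ∈ S)).length = (leafList w).length := by
          rw [List.length_filter_eq_length_iff]
          intro a ha
          simpa using hsub (by simpa [L] using ha)
        rw [hc, card_L_eq hndw, if_pos rfl, hfull]

end RTree
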